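/- Every oriented circular-arc catch digraph that is unilaterally connected possesses a Hamiltonian (directed) path. -/

import Mathlib

/-- Membership in the closed clockwise circular arc starting at `a` of length `ℓ`
on a circle of circumference 1 (points are reals modulo 1). -/
def arcMem (a ℓ x : ℝ) : Prop := Int.fract (x - a) ≤ ℓ

/-- The set of points of the circle (reals, modulo 1) lying on the arc. -/
def arcSet (a ℓ : ℝ) : Set ℝ := {x | arcMem a ℓ x}

/-- `E` is a circular-arc catch digraph: each vertex `v` carries a circular arc
(start `a v`, length `ℓ v`) and a point `p v` inside its own arc, and
`E u v` iff `u ≠ v` and the point of `v` lies in the arc of `u`. -/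
def IsCACatchDigraph {V : Type*} (E : V → V → Prop) : Prop :=
  ∃ a ℓ p : V → ℝ, (∀ v, arcMem (a v) (ℓ v) (p v)) ∧
    ∀ u v, E u v ↔ u ≠ v ∧ arcMem (a u) (ℓ u) (p v)

/-- Proper circular-arc catch digraph: as above, with no arc properly contained
in another. -/
def IsProperCACatchDigraph {V : Type*} (E : V → V → Prop) : Prop :=
  ∃ a ℓ p : V → ℝ, (∀ v, arcMem (a v) (ℓ v) (p v)) ∧
    (∀ u v : V, ¬ arcSet (a u) (ℓ u) ⊂ arcSet (a v) (ℓ v)) ∧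
    ∀ u v, E u v ↔ u ≠ v ∧ arcMem (a u) (ℓ u) (p v)

/-- A digraph is oriented: no pair of vertices has edges in both directions. -/
def Oriented {V : Type*} (E : V → V → Prop) : Prop := ∀ u v, E u v → ¬ E v u

/-- A subset of `Fin n` is a circular (cyclically consecutive) block. -/
def CircBlock {n : ℕ} (S : Set (Fin n)) : Prop :=
  S = ∅ ∨ ∃ a b : Fin n, S = {i | i - a ≤ b - a}


namespace HamAuxPre
end HamAuxPre
namespace HamAux
open Relation


lemma fract_sub_fract (x y : ℝ) :
    Int.fract (x - y) = Int.fract (Int.fract x - Int.fract y) := by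
  rw [Int.fract_eq_fract]
  exact ⟨⌊x⌋ - ⌊y⌋, by unfold Int.fract; push_cast; ring⟩

lemma fract_add_fract (x y : ℝ) :
    Int.fract (x + y) = Int.fract (Int.fract x + Int.fract y) := by
  rw [Int.fract_eq_fract]
  exact ⟨⌊x⌋ + ⌊y⌋, by unfold Int.fract; push_cast; ring⟩

/-- key identity: if cw-dist(a→b) ≤ cw-dist(a→c) then
cw-dist(b→c) = cw-dist(a→c) - cw-dist(a→b) -/
lemma J (a b c : ℝ) (h : Int.fract (b - a) ≤ Int.fract (c - a)) :
    Int.fract (c - b) = Int.fract (c - a) - Int.fract (b - a) := by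
  have e : c - b = (c - a) - (b - a) := by ring
  rw [e, fract_sub_fract]
  exact Int.fract_eq_self.mpr ⟨by linarith,
    by have := Int.fract_lt_one (c - a); have := Int.fract_nonneg (b - a); linarith⟩

/-- mirror identity -/
lemma J2 (a b c : ℝ) (h : Int.fract (c - b) ≤ Int.fract (c - a)) :
    Int.fract (b - a) = Int.fract (c - a) - Int.fract (c - b) := by
  have e : b - a = (c - a) - (c - b) := by ring
  rw [e, fract_sub_fract]
  exact Int.fract_eq_self.mpr ⟨by linarith,
    by have := Int.fract_lt_one (c - a); have := Int.fract_nonneg (c - b); linarith⟩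

lemma lemB {a ℓ c x : ℝ} (hc : arcMem a ℓ c) (hx : arcMem a ℓ x) :
    (∀ y, Int.fract (y - c) ≤ Int.fract (x - c) → arcMem a ℓ y) ∨
    (∀ y, Int.fract (c - y) ≤ Int.fract (c - x) → arcMem a ℓ y) := by
  by_cases h1 : 1 ≤ ℓ
  · exact Or.inl fun y _ => le_trans (le_of_lt (Int.fract_lt_one _)) h1
  push_neg at h1
  unfold arcMem at *
  rcases le_or_gt (Int.fract (c - a)) (Int.fract (x - a)) with hcx | hcx
  · left
    intro y hy
    have hxc : Int.fract (x - c) = Int.fract (x - a) - Int.fract (c - a) := by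
      have e : x - c = (x - a) - (c - a) := by ring
      rw [e, fract_sub_fract, Int.fract_eq_self.mpr]
      constructor
      · linarith
      · have := Int.fract_lt_one (x - a); have := Int.fract_nonneg (c - a); linarith
    have hy' : Int.fract (y - c) ≤ Int.fract (x - a) - Int.fract (c - a) := hxc ▸ hy
    have hya : Int.fract (y - a) = Int.fract (y - c) + Int.fract (c - a) := by
      have e : y - a = (y - c) + (c - a) := by ring
      rw [e, fract_add_fract, Int.fract_eq_self.mpr]
      constructor
      · have := Int.fract_nonneg (y - c); have := Int.fract_nonneg (c - a); linarith
      · linarith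
    linarith
  · right
    intro y hy
    have h0x := Int.fract_nonneg (x - a)
    have h0y := Int.fract_nonneg (c - y)
    have hxc : Int.fract (c - x) = Int.fract (c - a) - Int.fract (x - a) := by
      have e : c - x = (c - a) - (x - a) := by ring
      rw [e, fract_sub_fract, Int.fract_eq_self.mpr]
      constructor
      · linarith
      · have := Int.fract_lt_one (c - a); linarith
    have hy' : Int.fract (c - y) ≤ Int.fract (c - a) - Int.fract (x - a) := hxc ▸ hy
    have hya : Int.fract (y - a) = Int.fract (c - a) - Int.fract (c - y) := by
      have e : y - a = (c - a) - (c - y) := by ring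
      rw [e, fract_sub_fract, Int.fract_eq_self.mpr]
      constructor
      · linarith
      · have := Int.fract_lt_one (c - a); linarith
    linarith


open Relation

variable {V : Type*} (E : V → V → Prop)

/-- a unilateral finite digraph has a reachability-maximal vertex -/
lemma exists_max [Fintype V] [Nonempty V]
    (huni : ∀ u v : V, ReflTransGen E u v ∨ ReflTransGen E v u) :
    ∃ y : V, ∀ v, ReflTransGen E v y := by
  classical
  suffices h : ∀ s : Finset V, s.Nonempty → ∃ y ∈ s, ∀ v ∈ s, ReflTransGen E v y by
    obtain ⟨y, _, hy⟩ := h Finset.univ ⟨Classical.arbitrary V, Finset.mem_univ _⟩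
    exact ⟨y, fun v => hy v (Finset.mem_univ v)⟩
  intro s
  induction s using Finset.induction_on with
  | empty => rintro ⟨x, hx⟩; simp at hx
  | insert _ _ ha ih =>
    rename_i a s
    intro _
    rcases s.eq_empty_or_nonempty with rfl | hs
    · refine ⟨a, Finset.mem_insert_self _ _, ?_⟩
      intro v hv
      simp only [Finset.mem_insert, Finset.notMem_empty, or_false] at hv
      subst hv; exact ReflTransGen.refl
    · obtain ⟨y, hys, hy⟩ := ih hs
      rcases huni a y with h1 | h1
      · refine ⟨y, Finset.mem_insert_of_mem hys, ?_⟩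
        intro v hv
        rcases Finset.mem_insert.mp hv with rfl | hv
        · exact h1
        · exact hy v hv
      · refine ⟨a, Finset.mem_insert_self _ _, ?_⟩
        intro v hv
        rcases Finset.mem_insert.mp hv with rfl | hv
        · exact ReflTransGen.refl
        · exact (hy v hv).trans h1

/-- a reachable target has a last edge -/
lemma last_edge {u y : V} (h : ReflTransGen E u y) (hne : u ≠ y) :
    ∃ x, ReflTransGen E u x ∧ E x y := by
  induction h using ReflTransGen.head_induction_on with
  | refl => exact absurd rfl hne
  | head h' hrest ih =>
    rename_i a c
    by_cases hc : c = y
    · subst hc; exact ⟨a, ReflTransGen.refl, h'⟩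
    · obtain ⟨x, hx1, hx2⟩ := ih hc
      exact ⟨x, ReflTransGen.head h' hx1, hx2⟩

/-- reach from a vertex with no out-edges goes nowhere -/
lemma reach_of_noout {y v : V} (hno : ∀ x, ¬ E y x) (h : ReflTransGen E y v) : v = y := by
  rcases h.cases_head with h | ⟨c, hc, _⟩
  · exact h.symm
  · exact absurd hc (hno c)

/-- restrict a path avoiding a vertex with no out-edges to the subtype -/
lemma reach_restrict {y : V} (hno : ∀ x, ¬ E y x) {u v : V}
    (h : ReflTransGen E u v) (hv : v ≠ y) :
    ∀ (hu : u ≠ y), ReflTransGen (fun (s t : {x : V // x ≠ y}) => E s.1 t.1)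
      ⟨u, hu⟩ ⟨v, hv⟩ := by
  induction h using ReflTransGen.head_induction_on with
  | refl => intro _; exact ReflTransGen.refl
  | head h' hrest ih =>
    rename_i s c
    intro hs
    have hc : c ≠ y := by
      rintro rfl
      exact hv (reach_of_noout E hno hrest)
    exact ReflTransGen.head (show E s c from h') (ih hc)

/-- restrict mutual-reach paths into the strong component subtype of y -/
lemma reach_restrict_comp {y : V} {u v : V}
    (h : ReflTransGen E u v)
    (hv : ReflTransGen E v y ∧ ReflTransGen E y v) :
    ∀ (hu : ReflTransGen E u y ∧ ReflTransGen E y u),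
    ReflTransGen (fun (s t : {x : V // ReflTransGen E x y ∧ ReflTransGen E y x}) => E s.1 t.1)
      ⟨u, hu⟩ ⟨v, hv⟩ := by
  induction h using ReflTransGen.head_induction_on with
  | refl => intro _; exact ReflTransGen.refl
  | head h' hrest ih =>
    rename_i s c
    intro hs
    have hc : ReflTransGen E c y ∧ ReflTransGen E y c :=
      ⟨hrest.trans hv.1, hs.2.trans (ReflTransGen.single h')⟩
    exact ReflTransGen.head (show E s c from h') (ih hc)


section Core

variable {W : Type*} [Fintype W] (E : W → W → Prop) (a ℓ p : W → ℝ)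

/-- points of distinct vertices are distinct modulo 1 -/
lemma distinct_points
    (hown : ∀ v, arcMem (a v) (ℓ v) (p v))
    (hEdef : ∀ u v, E u v ↔ u ≠ v ∧ arcMem (a u) (ℓ u) (p v))
    (horient : ∀ u v, E u v → ¬ E v u) :
    ∀ u v : W, u ≠ v → Int.fract (p u - p v) ≠ 0 := by
  intro u v hne h0
  have hint : ∃ z : ℤ, p u - p v = z := by
    refine ⟨⌊p u - p v⌋, ?_⟩
    have : Int.fract (p u - p v) = p u - p v - ⌊p u - p v⌋ := rfl
    linarith [this ▸ h0]
  obtain ⟨z, hz⟩ := hint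
  have hequv : ∀ w : ℝ, Int.fract (p u - w) = Int.fract (p v - w) := by
    intro w
    rw [Int.fract_eq_fract]
    exact ⟨z, by linarith⟩
  have h1 : E v u := (hEdef v u).mpr ⟨hne.symm, by
    unfold arcMem at hown ⊢
    rw [hequv (a v)]; exact hown v⟩
  have h2 : E u v := (hEdef u v).mpr ⟨hne, by
    unfold arcMem at hown ⊢
    rw [show Int.fract (p v - a u) = Int.fract (p u - a u) from (hequv (a u)).symm]
    exact hown u⟩
  exact horient u v h2 h1


set_option maxHeartbeats 1000000 in
theorem core
    (hown : ∀ v, arcMem (a v) (ℓ v) (p v))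
    (hEdef : ∀ u v, E u v ↔ u ≠ v ∧ arcMem (a u) (ℓ u) (p v))
    (horient : ∀ u v, E u v → ¬ E v u)
    (hm : 2 ≤ Fintype.card W) (hout : ∀ v, ∃ x, E v x) :
    (∃ c : Fin (Fintype.card W) ≃ W,
        ∀ i : Fin (Fintype.card W),
          E (c i) (c ⟨((i : ℕ) + 1) % Fintype.card W, Nat.mod_lt _ (by omega)⟩)) ∧
    (∀ q : ℝ, ∃ w : W, arcMem (a w) (ℓ w) q) := by
  classical
  have hdist := distinct_points E a ℓ p hown hEdef horient
  set m := Fintype.card W with hmdef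
  have hm0 : 0 < m := by omega
  have hne : Nonempty W := Fintype.card_pos_iff.mp hm0
  obtain ⟨w₀⟩ := hne
  set key : W → ℝ := fun w => Int.fract (p w - p w₀) with hkey
  have hkeyfr : ∀ u v : W, Int.fract (p u - p v) = Int.fract (key u - key v) := by
    intro u v
    rw [hkey]
    simp only
    rw [show p u - p v = (p u - p w₀) - (p v - p w₀) by ring]
    exact fract_sub_fract _ _
  have hkeyinj : Function.Injective key := by
    intro u v huv
    by_contra hne2
    apply hdist u v hne2
    rw [hkeyfr u v, huv, sub_self, Int.fract_zero]
  set s : Finset ℝ := Finset.univ.image key with hsdef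
  have hs : s.card = m := by
    rw [hsdef, Finset.card_image_of_injective _ hkeyinj, Finset.card_univ]
  set oi := s.orderIsoOfFin hs with hoidef
  have hgex : ∀ t : {x // x ∈ s}, ∃ w : W, key w = (t : ℝ) := by
    intro t
    obtain ⟨w, _, hw⟩ := Finset.mem_image.mp t.2
    exact ⟨w, hw⟩
  set g : {x // x ∈ s} → W := fun t => Classical.choose (hgex t) with hgdef
  have hg : ∀ t, key (g t) = (t : ℝ) := fun t => Classical.choose_spec (hgex t)
  have hginj : Function.Injective g := by
    intro t₁ t₂ h
    have : (t₁ : ℝ) = (t₂ : ℝ) := by rw [← hg t₁, ← hg t₂, h]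
    exact Subtype.ext this
  have hgbij : Function.Bijective g := by
    rw [Fintype.bijective_iff_injective_and_card]
    exact ⟨hginj, by rw [Fintype.card_coe, hs]⟩
  set e : Fin m ≃ W := oi.toEquiv.trans (Equiv.ofBijective g hgbij) with hedef
  set K : Fin m → ℝ := fun i => key (e i) with hKdef
  have hKoi : ∀ i, K i = (oi i : ℝ) := by
    intro i
    rw [hKdef]
    simp only [hedef, Equiv.trans_apply]
    exact hg (oi i)
  have hKmono : StrictMono K := by
    intro i j hij
    rw [hKoi i, hKoi j]
    exact_mod_cast oi.strictMono hij
  have hK0 : ∀ i, 0 ≤ K i := fun i => Int.fract_nonneg _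
  have hK1 : ∀ i, K i < 1 := fun i => Int.fract_lt_one _
  have hD : ∀ i j : Fin m, Int.fract (p (e j) - p (e i)) = Int.fract (K j - K i) :=
    fun i j => hkeyfr (e j) (e i)
  have hDlt : ∀ i j : Fin m, i < j → Int.fract (p (e j) - p (e i)) = K j - K i := by
    intro i j hij
    rw [hD i j]
    exact Int.fract_eq_self.mpr ⟨by linarith [hKmono hij], by linarith [hK0 i, hK1 j]⟩
  have hDgt : ∀ i j : Fin m, j < i → Int.fract (p (e j) - p (e i)) = K j - K i + 1 := by
    intro i j hij
    have h1 : Int.fract (K j - K i) = Int.fract (K j - K i + 1) := by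
      rw [show K j - K i + 1 = K j - K i + (1 : ℤ) by push_cast; ring, Int.fract_add_intCast]
    rw [hD i j, h1]
    exact Int.fract_eq_self.mpr ⟨by linarith [hK0 j, hK1 i], by linarith [hKmono hij]⟩
  -- cyclic successor and predecessor
  set nxt : Fin m → Fin m := fun i => ⟨((i : ℕ) + 1) % m, Nat.mod_lt _ hm0⟩ with hnxtdef
  set prv : Fin m → Fin m := fun i => ⟨((i : ℕ) + (m - 1)) % m, Nat.mod_lt _ hm0⟩ with hprvdef
  have hnxt_lt : ∀ (i : Fin m) (h : (i : ℕ) + 1 < m), nxt i = ⟨(i : ℕ) + 1, h⟩ := by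
    intro i h; rw [hnxtdef]; exact Fin.ext (Nat.mod_eq_of_lt h)
  have hnxt_top : ∀ i : Fin m, (i : ℕ) + 1 = m → nxt i = ⟨0, hm0⟩ := by
    intro i h; rw [hnxtdef]; exact Fin.ext (by simp only [h, Nat.mod_self])
  have hprv_pos : ∀ (i : Fin m) (h : 0 < (i : ℕ)), prv i = ⟨(i : ℕ) - 1, by omega⟩ := by
    intro i h
    rw [hprvdef]
    refine Fin.ext ?_
    simp only
    have h2 : (i : ℕ) + (m - 1) = m + ((i : ℕ) - 1) := by omega
    rw [h2, Nat.add_mod_left, Nat.mod_eq_of_lt (by omega)]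
  have hprv_zero : ∀ i : Fin m, (i : ℕ) = 0 → prv i = ⟨m - 1, by omega⟩ := by
    intro i h
    rw [hprvdef]
    exact Fin.ext (by simp only [h, Nat.zero_add]; exact Nat.mod_eq_of_lt (by omega))
  have hnxtne : ∀ i : Fin m, nxt i ≠ i := by
    intro i h
    by_cases hi : (i : ℕ) + 1 < m
    · rw [hnxt_lt i hi] at h
      have h2 : (i : ℕ) + 1 = (i : ℕ) := congrArg Fin.val h
      omega
    · have hm1 : (i : ℕ) + 1 = m := by have := i.isLt; omega
      rw [hnxt_top i hm1] at h
      have h2 : (0 : ℕ) = (i : ℕ) := congrArg Fin.val h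
      omega
  have hprvne : ∀ i : Fin m, prv i ≠ i := by
    intro i h
    by_cases hi : 0 < (i : ℕ)
    · rw [hprv_pos i hi] at h
      have h2 : (i : ℕ) - 1 = (i : ℕ) := congrArg Fin.val h
      omega
    · have h0 : (i : ℕ) = 0 := by omega
      rw [hprv_zero i h0] at h
      have h2 : m - 1 = (i : ℕ) := congrArg Fin.val h
      omega
  have hpn : ∀ i : Fin m, prv (nxt i) = i := by
    intro i
    rw [hprvdef, hnxtdef]
    refine Fin.ext ?_
    simp only
    rw [Nat.mod_add_mod]
    have h2 : (i : ℕ) + 1 + (m - 1) = (i : ℕ) + m := by omega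
    rw [h2, Nat.add_mod_right, Nat.mod_eq_of_lt i.isLt]
  have hnp : ∀ i : Fin m, nxt (prv i) = i := by
    intro i
    rw [hprvdef, hnxtdef]
    refine Fin.ext ?_
    simp only
    rw [Nat.mod_add_mod]
    have h2 : (i : ℕ) + (m - 1) + 1 = (i : ℕ) + m := by omega
    rw [h2, Nat.add_mod_right, Nat.mod_eq_of_lt i.isLt]
  -- minimality of nxt for clockwise distance, prv for counterclockwise
  have NXT : ∀ i j : Fin m, j ≠ i →
      Int.fract (p (e (nxt i)) - p (e i)) ≤ Int.fract (p (e j) - p (e i)) := by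
    intro i j hji
    by_cases hi : (i : ℕ) + 1 < m
    · rw [hnxt_lt i hi]
      have hlt : i < (⟨(i : ℕ) + 1, by omega⟩ : Fin m) :=
        Fin.lt_def.mpr (show (i : ℕ) < (i : ℕ) + 1 by omega)
      rw [hDlt i _ hlt]
      rcases lt_or_gt_of_ne (fun h => hji (Fin.ext h) : (j : ℕ) ≠ (i : ℕ)) with hj | hj
      · rw [hDgt i j (Fin.lt_def.mpr hj)]
        linarith [hK1 ⟨(i : ℕ) + 1, by omega⟩, hK0 j]
      · rw [hDlt i j (Fin.lt_def.mpr hj)]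
        have : K ⟨(i : ℕ) + 1, by omega⟩ ≤ K j := by
          rcases eq_or_lt_of_le (show (i : ℕ) + 1 ≤ (j : ℕ) from hj) with h | h
          · exact le_of_eq (congrArg K (Fin.ext h))
          · exact le_of_lt (hKmono (Fin.lt_def.mpr h))
        linarith
    · have htop : (i : ℕ) + 1 = m := by have := i.isLt; omega
      rw [hnxt_top i htop]
      have hj : (j : ℕ) < (i : ℕ) := by have := j.isLt; omega
      have h0i : (⟨0, hm0⟩ : Fin m) < i := Fin.lt_def.mpr (show 0 < (i : ℕ) by omega)
      rw [hDgt i _ h0i, hDgt i j (Fin.lt_def.mpr hj)]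
      have : K ⟨0, hm0⟩ ≤ K j := by
        rcases Nat.eq_zero_or_pos (j : ℕ) with h | h
        · exact le_of_eq (congrArg K (Fin.ext h.symm))
        · exact le_of_lt (hKmono (Fin.lt_def.mpr (show 0 < (j : ℕ) from h)))
      linarith
  have MPRV : ∀ i j : Fin m, j ≠ i →
      Int.fract (p (e i) - p (e (prv i))) ≤ Int.fract (p (e i) - p (e j)) := by
    intro i j hji
    by_cases hi : 0 < (i : ℕ)
    · rw [hprv_pos i hi]
      have hlt : (⟨(i : ℕ) - 1, by omega⟩ : Fin m) < i :=
        Fin.lt_def.mpr (show (i : ℕ) - 1 < (i : ℕ) by omega)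
      rw [hDlt _ i hlt]
      rcases lt_or_gt_of_ne (fun h => hji (Fin.ext h) : (j : ℕ) ≠ (i : ℕ)) with hj | hj
      · rw [hDlt j i (Fin.lt_def.mpr hj)]
        have : K j ≤ K ⟨(i : ℕ) - 1, by omega⟩ := by
          rcases eq_or_lt_of_le (show (j : ℕ) ≤ (i : ℕ) - 1 by omega) with h | h
          · exact le_of_eq (congrArg K (Fin.ext h))
          · exact le_of_lt (hKmono (Fin.lt_def.mpr h))
        linarith
      · rw [hDgt j i (Fin.lt_def.mpr hj)]
        linarith [hK1 j, hK0 ⟨(i : ℕ) - 1, by omega⟩]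
    · have h0 : (i : ℕ) = 0 := by omega
      rw [hprv_zero i h0]
      have hj : (i : ℕ) < (j : ℕ) := by omega
      have hmi : i < (⟨m - 1, by omega⟩ : Fin m) :=
        Fin.lt_def.mpr (show (i : ℕ) < m - 1 by have := j.isLt; omega)
      rw [hDgt _ i hmi, hDgt j i (Fin.lt_def.mpr hj)]
      have : K j ≤ K ⟨m - 1, by omega⟩ := by
        rcases eq_or_lt_of_le (show (j : ℕ) ≤ m - 1 by have := j.isLt; omega) with h | h
        · exact le_of_eq (congrArg K (Fin.ext h))
        · exact le_of_lt (hKmono (Fin.lt_def.mpr h))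
      linarith
  -- every vertex has an edge to its cyclic neighbour (one side)
  have hJfr : ∀ A B C : ℝ, Int.fract (B - A) ≤ Int.fract (C - A) →
      Int.fract (C - B) = Int.fract (C - A) - Int.fract (B - A) := by
    intro A B C h
    have eq1 : C - B = (C - A) - (B - A) := by ring
    rw [eq1, fract_sub_fract]
    exact Int.fract_eq_self.mpr ⟨by linarith,
      by linarith [Int.fract_lt_one (C - A), Int.fract_nonneg (B - A)]⟩
  have hJ2fr : ∀ A B C : ℝ, Int.fract (C - B) ≤ Int.fract (C - A) →
      Int.fract (B - A) = Int.fract (C - A) - Int.fract (C - B) := by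
    intro A B C h
    have eq1 : B - A = (C - A) - (C - B) := by ring
    rw [eq1, fract_sub_fract]
    exact Int.fract_eq_self.mpr ⟨by linarith,
      by linarith [Int.fract_lt_one (C - A), Int.fract_nonneg (C - B)]⟩
  have hedge1 : ∀ i : Fin m, E (e i) (e (nxt i)) ∨ E (e i) (e (prv i)) := by
    intro i
    obtain ⟨x, hx⟩ := hout (e i)
    have hxne : e i ≠ x := ((hEdef _ _).mp hx).1
    have harc : arcMem (a (e i)) (ℓ (e i)) (p x) := ((hEdef _ _).mp hx).2
    set j := e.symm x with hjdef
    have hji : j ≠ i := by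
      intro h
      apply hxne
      rw [← e.apply_symm_apply x, ← hjdef, h]
    have hxj : x = e j := by rw [hjdef, e.apply_symm_apply]
    rw [hxj] at harc
    rcases lemB (hown (e i)) harc with hL | hR
    · left
      refine (hEdef _ _).mpr ⟨?_, hL (p (e (nxt i))) (NXT i j hji)⟩
      intro h
      exact hnxtne i (e.injective h.symm)
    · right
      refine (hEdef _ _).mpr ⟨?_, hR (p (e (prv i))) (MPRV i j hji)⟩
      intro h
      exact hprvne i (e.injective h.symm)
  have hstep : ∀ i : Fin m, E (e i) (e (nxt i)) → E (e (nxt i)) (e (nxt (nxt i))) := by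
    intro i hi
    rcases hedge1 (nxt i) with h | h
    · exact h
    · rw [hpn i] at h
      exact absurd hi (horient _ _ h)
  by_cases hall : ∀ i : Fin m, E (e i) (e (nxt i))
  · -- clockwise case
    constructor
    · exact ⟨e, fun i => hall i⟩
    · intro q
      obtain ⟨i₀, -, hmin⟩ := Finset.exists_min_image Finset.univ
        (fun i : Fin m => Int.fract (q - p (e i))) ⟨⟨0, hm0⟩, Finset.mem_univ _⟩
      have hminq : ∀ j : Fin m, Int.fract (q - p (e i₀)) ≤ Int.fract (q - p (e j)) :=
        fun j => hmin j (Finset.mem_univ _)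
      have hqn : Int.fract (q - p (e i₀)) ≤ Int.fract (p (e (nxt i₀)) - p (e i₀)) := by
        by_contra hcon
        push_neg at hcon
        have hJ := hJfr (p (e i₀)) (p (e (nxt i₀))) q (le_of_lt hcon)
        have hpos : 0 < Int.fract (p (e (nxt i₀)) - p (e i₀)) := by
          have hne2 : e (nxt i₀) ≠ e i₀ := fun h => hnxtne i₀ (e.injective h)
          have := hdist (e (nxt i₀)) (e i₀) hne2
          have := Int.fract_nonneg (p (e (nxt i₀)) - p (e i₀))
          rcases lt_or_eq_of_le this with h | h
          · exact h
          · exact absurd h.symm (hdist _ _ hne2)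
        linarith [hminq (nxt i₀)]
      rcases lemB (hown (e i₀)) ((hEdef _ _).mp (hall i₀)).2 with hL | hR
      · exact ⟨e i₀, hL q hqn⟩
      · exfalso
        have hEprv : E (e i₀) (e (prv i₀)) := by
          refine (hEdef _ _).mpr ⟨?_, hR (p (e (prv i₀))) (MPRV i₀ (nxt i₀) (hnxtne i₀))⟩
          intro h
          exact hprvne i₀ (e.injective h.symm)
        have hback : E (e (prv i₀)) (e i₀) := by
          have := hall (prv i₀)
          rwa [hnp i₀] at this
        exact horient _ _ hback hEprv
  · -- counterclockwise case
    push_neg at hall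
    obtain ⟨i₀, hi₀⟩ := hall
    have hnone : ∀ i : Fin m, ¬ E (e i) (e (nxt i)) := by
      intro i hi
      apply hi₀
      have hiter : ∀ k : ℕ, E (e ⟨((i : ℕ) + k) % m, Nat.mod_lt _ hm0⟩)
          (e (nxt ⟨((i : ℕ) + k) % m, Nat.mod_lt _ hm0⟩)) := by
        intro k
        induction k with
        | zero =>
          have h0 : (⟨((i : ℕ) + 0) % m, Nat.mod_lt _ hm0⟩ : Fin m) = i :=
            Fin.ext (by simp [Nat.mod_eq_of_lt i.isLt])
          rw [h0]; exact hi
        | succ k ih =>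
          have hsucc : (⟨((i : ℕ) + (k + 1)) % m, Nat.mod_lt _ hm0⟩ : Fin m) =
              nxt ⟨((i : ℕ) + k) % m, Nat.mod_lt _ hm0⟩ := by
            rw [hnxtdef]
            refine Fin.ext ?_
            simp only
            rw [Nat.mod_add_mod]
            congr 1
          rw [hsucc]
          exact hstep _ ih
      have hk := hiter ((m - (i : ℕ)) + (i₀ : ℕ))
      have hidx : (⟨((i : ℕ) + ((m - (i : ℕ)) + (i₀ : ℕ))) % m, Nat.mod_lt _ hm0⟩ : Fin m) = i₀ := by
        refine Fin.ext ?_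
        simp only
        have h2 : (i : ℕ) + ((m - (i : ℕ)) + (i₀ : ℕ)) = m + (i₀ : ℕ) := by
          have := i.isLt; omega
        rw [h2, Nat.add_mod_left, Nat.mod_eq_of_lt i₀.isLt]
      rwa [hidx] at hk
    have hallL : ∀ i : Fin m, E (e i) (e (prv i)) :=
      fun i => (hedge1 i).resolve_left (hnone i)
    constructor
    · -- reversed enumeration gives the hamcycle
      have hrevinv : ∀ j : Fin m, m - 1 - (m - 1 - (j : ℕ)) = (j : ℕ) := by
        intro j; have := j.isLt; omega
      set rev : Fin m → Fin m := fun j => ⟨m - 1 - (j : ℕ), by omega⟩ with hrevdef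
      have hrevinv2 : Function.Involutive rev := by
        intro j
        rw [hrevdef]
        exact Fin.ext (by simpa using hrevinv j)
      set c : Fin m ≃ W := (Function.Involutive.toPerm rev hrevinv2).trans e with hcdef
      refine ⟨c, ?_⟩
      intro j
      have hc1 : c j = e ⟨m - 1 - (j : ℕ), by omega⟩ := rfl
      have hc2 : c ⟨((j : ℕ) + 1) % m, Nat.mod_lt _ hm0⟩ =
          e (prv ⟨m - 1 - (j : ℕ), by omega⟩) := by
        have : rev ⟨((j : ℕ) + 1) % m, Nat.mod_lt _ hm0⟩ = prv ⟨m - 1 - (j : ℕ), by omega⟩ := by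
          rw [hrevdef, hprvdef]
          refine Fin.ext ?_
          simp only
          by_cases hj : (j : ℕ) + 1 < m
          · rw [Nat.mod_eq_of_lt hj]
            have h2 : m - 1 - (j : ℕ) + (m - 1) = m + (m - 1 - ((j : ℕ) + 1)) := by omega
            rw [h2, Nat.add_mod_left, Nat.mod_eq_of_lt (by omega)]
          · have hj2 : (j : ℕ) + 1 = m := by have := j.isLt; omega
            rw [hj2, Nat.mod_self]
            have h3 : m - 1 - (j : ℕ) = 0 := by omega
            rw [h3, Nat.zero_add, Nat.mod_eq_of_lt (by omega)]
            omega
        rw [hcdef]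
        simp only [Equiv.trans_apply, Equiv.coe_fn_mk]
        rw [show (Function.Involutive.toPerm rev hrevinv2) ⟨((j : ℕ) + 1) % m, Nat.mod_lt _ hm0⟩
            = rev ⟨((j : ℕ) + 1) % m, Nat.mod_lt _ hm0⟩ from rfl, this]
      rw [hc1, hc2]
      exact hallL _
    · intro q
      obtain ⟨i₀, -, hmin⟩ := Finset.exists_min_image Finset.univ
        (fun i : Fin m => Int.fract (p (e i) - q)) ⟨⟨0, hm0⟩, Finset.mem_univ _⟩
      have hminq : ∀ j : Fin m, Int.fract (p (e i₀) - q) ≤ Int.fract (p (e j) - q) :=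
        fun j => hmin j (Finset.mem_univ _)
      have hqn : Int.fract (p (e i₀) - q) ≤ Int.fract (p (e i₀) - p (e (prv i₀))) := by
        by_contra hcon
        push_neg at hcon
        have hJ := hJ2fr q (p (e (prv i₀))) (p (e i₀)) (le_of_lt hcon)
        have hpos : 0 < Int.fract (p (e i₀) - p (e (prv i₀))) := by
          have hne2 : e i₀ ≠ e (prv i₀) := fun h => hprvne i₀ (e.injective h).symm
          have hnn := Int.fract_nonneg (p (e i₀) - p (e (prv i₀)))
          rcases lt_or_eq_of_le hnn with h | h
          · exact h
          · exact absurd h.symm (hdist _ _ hne2)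
        linarith [hminq (prv i₀)]
      rcases lemB (hown (e i₀)) ((hEdef _ _).mp (hallL i₀)).2 with hL | hR
      · exfalso
        have hEnxt : E (e i₀) (e (nxt i₀)) := by
          refine (hEdef _ _).mpr ⟨?_, hL (p (e (nxt i₀))) (NXT i₀ (prv i₀) (hprvne i₀))⟩
          intro h
          exact hnxtne i₀ (e.injective h.symm)
        have hback : E (e (nxt i₀)) (e i₀) := by
          have := hallL (nxt i₀)
          rwa [hpn i₀] at this
        exact horient _ _ hback hEnxt
      · exact ⟨e i₀, hR q hqn⟩


end Core


universe u

set_option maxHeartbeats 1000000 in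
theorem aux : ∀ (n : ℕ) (V : Type u) [Fintype V] (E : V → V → Prop) (a ℓ p : V → ℝ),
    (∀ v, arcMem (a v) (ℓ v) (p v)) →
    (∀ u v, E u v ↔ u ≠ v ∧ arcMem (a u) (ℓ u) (p v)) →
    (∀ u v, E u v → ¬ E v u) →
    (∀ u v : V, ReflTransGen E u v ∨ ReflTransGen E v u) →
    Fintype.card V = n →
    ∀ y : V, (∀ v, ReflTransGen E v y) →
    ∃ σ : Fin n ≃ V, (∀ (i : ℕ) (h : i + 1 < n), E (σ ⟨i, by omega⟩) (σ ⟨i + 1, h⟩)) ∧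
      (∀ hn : n - 1 < n, σ ⟨n - 1, hn⟩ = y) := by
  intro n
  induction n using Nat.strong_induction_on with
  | _ n IH =>
    intro V instF E a ℓ p hown hEdef horient huni hcard y hy
    classical
    have hn0 : 0 < n := by
      rw [← hcard]
      exact Fintype.card_pos_iff.mpr ⟨y⟩
    by_cases hstrong : ∀ u v : V, ReflTransGen E u v
    · -- strong case : use the hamiltonian cycle, rotated to end at y
      by_cases hn1 : n = 1
      · subst hn1
        refine ⟨(Fintype.equivFinOfCardEq hcard).symm, fun i h => by omega, fun hn => ?_⟩
        have hsub : Subsingleton V := by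
          rw [← Fintype.card_le_one_iff_subsingleton, hcard]
        exact Subsingleton.elim _ _
      · have hm2 : 2 ≤ Fintype.card V := by omega
        have hout : ∀ v : V, ∃ x, E v x := by
          intro v
          obtain ⟨u, hu⟩ := Fintype.exists_ne_of_one_lt_card (by omega) v
          rcases (hstrong v u).cases_head with h | ⟨c, hc, -⟩
          · exact absurd h.symm hu
          · exact ⟨c, hc⟩
        obtain ⟨⟨cyc, hc⟩, -⟩ := core E a ℓ p hown hEdef horient hm2 hout
        set cyc2 : Fin n ≃ V := (finCongr hcard.symm).trans cyc with hcyc2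
        have hc2 : ∀ i : Fin n, E (cyc2 i) (cyc2 ⟨((i : ℕ) + 1) % n, Nat.mod_lt _ hn0⟩) := by
          intro i
          have h5 := hc ⟨(i : ℕ), hcard ▸ i.isLt⟩
          have e1 : cyc2 i = cyc ⟨(i : ℕ), hcard ▸ i.isLt⟩ := rfl
          have e2 : cyc2 ⟨((i : ℕ) + 1) % n, Nat.mod_lt _ hn0⟩ =
              cyc ⟨((i : ℕ) + 1) % Fintype.card V, Nat.mod_lt _ (by omega)⟩ := by
            rw [hcyc2]
            simp only [Equiv.trans_apply]
            congr 1
            refine Fin.ext ?_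
            show ((i : ℕ) + 1) % n = ((i : ℕ) + 1) % Fintype.card V
            rw [hcard]
          rw [e1, e2]
          exact h5
        clear hc
        set idx := cyc2.symm y with hidx
        set k₀ := ((idx : ℕ) + 1) % n with hk₀
        have hk₀lt : k₀ < n := Nat.mod_lt _ hn0
        have hshinv : ∀ i : Fin n, (((((i : ℕ) + k₀) % n) + (n - k₀)) % n) = (i : ℕ) := by
          intro i
          rw [Nat.mod_add_mod]
          have h2 : (i : ℕ) + k₀ + (n - k₀) = (i : ℕ) + n := by omega
          rw [h2, Nat.add_mod_right, Nat.mod_eq_of_lt i.isLt]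
        have hshinv2 : ∀ i : Fin n, (((((i : ℕ) + (n - k₀)) % n) + k₀) % n) = (i : ℕ) := by
          intro i
          rw [Nat.mod_add_mod]
          have h2 : (i : ℕ) + (n - k₀) + k₀ = (i : ℕ) + n := by omega
          rw [h2, Nat.add_mod_right, Nat.mod_eq_of_lt i.isLt]
        set shE : Fin n ≃ Fin n :=
          ⟨fun i => ⟨((i : ℕ) + k₀) % n, Nat.mod_lt _ hn0⟩,
           fun j => ⟨((j : ℕ) + (n - k₀)) % n, Nat.mod_lt _ hn0⟩,
           fun i => Fin.ext (hshinv i), fun j => Fin.ext (hshinv2 j)⟩ with hshE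
        refine ⟨shE.trans cyc2, ?_, ?_⟩
        · intro i h
          have e1 : (shE.trans cyc2) ⟨i, by omega⟩ = cyc2 ⟨(i + k₀) % n, Nat.mod_lt _ hn0⟩ := rfl
          have e2 : (shE.trans cyc2) ⟨i + 1, h⟩ = cyc2 ⟨(i + 1 + k₀) % n, Nat.mod_lt _ hn0⟩ := rfl
          rw [e1, e2]
          have h5 := hc2 ⟨(i + k₀) % n, Nat.mod_lt _ hn0⟩
          have h4 : (⟨(((i + k₀) % n : ℕ) + 1) % n, Nat.mod_lt _ hn0⟩ : Fin n) =
              ⟨(i + 1 + k₀) % n, Nat.mod_lt _ hn0⟩ := by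
            refine Fin.ext ?_
            show (((i + k₀) % n : ℕ) + 1) % n = (i + 1 + k₀) % n
            rw [Nat.mod_add_mod]
            congr 1
            omega
          rw [h4] at h5
          exact h5
        · intro hn
          have e1 : (shE.trans cyc2) ⟨n - 1, hn⟩ = cyc2 ⟨(n - 1 + k₀) % n, Nat.mod_lt _ hn0⟩ := rfl
          rw [e1]
          have h3 : (n - 1 + k₀) % n = (idx : ℕ) := by
            by_cases hcase : (idx : ℕ) + 1 < n
            · rw [hk₀, Nat.mod_eq_of_lt hcase]
              have h4 : n - 1 + ((idx : ℕ) + 1) = n + (idx : ℕ) := by omega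
              rw [h4, Nat.add_mod_left, Nat.mod_eq_of_lt idx.isLt]
            · have h5 : (idx : ℕ) + 1 = n := by have := idx.isLt; omega
              rw [hk₀, h5, Nat.mod_self, Nat.add_zero, Nat.mod_eq_of_lt (by omega)]
              omega
          have h6 : (⟨(n - 1 + k₀) % n, Nat.mod_lt _ hn0⟩ : Fin n) = idx := Fin.ext h3
          rw [h6, hidx, cyc2.apply_symm_apply]
    · -- non-strong case
      push_neg at hstrong
      obtain ⟨u₀, v₀, hno0⟩ := hstrong
      -- y has no out-edges
      have hnoout : ∀ x, ¬ E y x := by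
        intro x hx
        set T := {z : V // ReflTransGen E z y ∧ ReflTransGen E y z} with hT
        have hxC : ReflTransGen E x y ∧ ReflTransGen E y x := ⟨hy x, ReflTransGen.single hx⟩
        have hyC : ReflTransGen E y y ∧ ReflTransGen E y y := ⟨ReflTransGen.refl, ReflTransGen.refl⟩
        set x' : T := ⟨x, hxC⟩ with hx'
        set y' : T := ⟨y, hyC⟩ with hy'
        have hxyne : x ≠ y := fun h => ((hEdef y x).mp hx).1 h.symm
        have hm2' : 2 ≤ Fintype.card T := by
          have hnt : Nontrivial T := ⟨⟨x', y', fun h => hxyne (congrArg Subtype.val h)⟩⟩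
          exact Fintype.one_lt_card_iff_nontrivial.mpr hnt
        set E' : T → T → Prop := fun s t => E s.1 t.1 with hE'
        have hEdef' : ∀ u v : T, E' u v ↔ u ≠ v ∧
            arcMem (a u.1) (ℓ u.1) (p v.1) := by
          intro u v
          constructor
          · intro h
            obtain ⟨h1, h2⟩ := (hEdef u.1 v.1).mp h
            exact ⟨fun hh => h1 (congrArg Subtype.val hh), h2⟩
          · rintro ⟨h1, h2⟩
            exact (hEdef u.1 v.1).mpr ⟨fun hh => h1 (Subtype.ext hh), h2⟩
        have hout' : ∀ v : T, ∃ t : T, E' v t := by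
          intro v
          have hother : ∃ w : T, w ≠ v := by
            by_cases hvy : v = y'
            · exact ⟨x', fun h => hxyne (congrArg Subtype.val (h.trans hvy))⟩
            · exact ⟨y', fun h => hvy h.symm⟩
          obtain ⟨w, hw⟩ := hother
          have hreach : ReflTransGen E v.1 w.1 := (v.2.1).trans w.2.2
          have hrr := reach_restrict_comp E hreach w.2 v.2
          rcases hrr.cases_head with h | ⟨cc, hcc, -⟩
          · exact absurd h.symm hw
          · exact ⟨cc, hcc⟩
        obtain ⟨-, cover⟩ := core E' (fun t => a t.1) (fun t => ℓ t.1) (fun t => p t.1)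
          (fun t => hown t.1) hEdef' (fun u v h h' => horient u.1 v.1 h h') hm2' hout'
        have hyv : ∀ v : V, ReflTransGen E y v := by
          intro v
          obtain ⟨w, hw⟩ := cover (p v)
          by_cases hwv : (w.1 : V) = v
          · exact hwv ▸ w.2.2
          · exact (w.2.2).trans (ReflTransGen.single ((hEdef _ _).mpr ⟨hwv, hw⟩))
        exact hno0 ((hy u₀).trans (hyv v₀))
      -- n ≥ 2
      have hn2 : 2 ≤ n := by
        by_contra hc
        have hn1 : n = 1 := by omega
        have hsub : Subsingleton V := by
          rw [← Fintype.card_le_one_iff_subsingleton, hcard, hn1]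
        exact hno0 (Subsingleton.elim u₀ v₀ ▸ ReflTransGen.refl)
      set T := {z : V // z ≠ y} with hT
      have hcardT : Fintype.card T = n - 1 := by
        have h1 : Fintype.card {z : V // ¬ z = y} = Fintype.card V - Fintype.card {z : V // z = y} :=
          Fintype.card_subtype_compl _
        have h2 : Fintype.card T = Fintype.card {z : V // ¬ z = y} :=
          Fintype.card_congr (Equiv.subtypeEquivRight (fun z => Iff.rfl))
        rw [h2, h1, Fintype.card_subtype_eq, hcard]
      set E' : T → T → Prop := fun s t => E s.1 t.1 with hE'
      have hEdef' : ∀ u v : T, E' u v ↔ u ≠ v ∧ arcMem (a u.1) (ℓ u.1) (p v.1) := by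
        intro u v
        constructor
        · intro h
          obtain ⟨h1, h2⟩ := (hEdef u.1 v.1).mp h
          exact ⟨fun hh => h1 (congrArg Subtype.val hh), h2⟩
        · rintro ⟨h1, h2⟩
          exact (hEdef u.1 v.1).mpr ⟨fun hh => h1 (Subtype.ext hh), h2⟩
      have huni' : ∀ u v : T, ReflTransGen E' u v ∨ ReflTransGen E' v u := by
        intro u v
        rcases huni u.1 v.1 with h | h
        · exact Or.inl (by
            have := reach_restrict E hnoout h v.2 u.2
            exact this)
        · exact Or.inr (by
            have := reach_restrict E hnoout h u.2 v.2
            exact this)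
      have hneT : Nonempty T := by
        obtain ⟨z, hz⟩ := Fintype.exists_ne_of_one_lt_card (by omega : 1 < Fintype.card V) y
        exact ⟨⟨z, hz⟩⟩
      obtain ⟨mx, hmx⟩ := exists_max E' huni'
      obtain ⟨x, hx1, hx2⟩ := last_edge E (hy mx.1) mx.2
      have hxne : x ≠ y := fun h => ((hEdef x y).mp hx2).1 h
      set x' : T := ⟨x, hxne⟩ with hx'
      have hreach' : ∀ v : T, ReflTransGen E' v x' := by
        intro v
        exact (hmx v).trans (reach_restrict E hnoout hx1 hxne mx.2)
      obtain ⟨σ', hσ'e, hσ'end⟩ := IH (n - 1) (by omega) T E' (fun t => a t.1) (fun t => ℓ t.1)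
        (fun t => p t.1) (fun t => hown t.1) hEdef' (fun u v h h' => horient u.1 v.1 h h')
        huni' hcardT x' hreach'
      -- assemble
      set f : Fin n → V := fun i => if h : (i : ℕ) < n - 1 then (σ' ⟨i, h⟩).1 else y with hf
      have hfpos : ∀ (i : Fin n) (h : (i : ℕ) < n - 1), f i = (σ' ⟨(i : ℕ), h⟩).1 := by
        intro i h
        rw [hf]
        exact dif_pos h
      have hfneg : ∀ (i : Fin n), ¬ ((i : ℕ) < n - 1) → f i = y := by
        intro i h
        rw [hf]
        exact dif_neg h
      have hinj : Function.Injective f := by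
        intro i j hij
        by_cases hi : (i : ℕ) < n - 1 <;> by_cases hj : (j : ℕ) < n - 1
        · rw [hfpos i hi, hfpos j hj] at hij
          have h1 := σ'.injective (Subtype.val_injective hij)
          have h2 : ((⟨(i : ℕ), hi⟩ : Fin (n - 1)) : ℕ) = ((⟨(j : ℕ), hj⟩ : Fin (n - 1)) : ℕ) :=
            congrArg Fin.val h1
          exact Fin.ext (show (i : ℕ) = (j : ℕ) from h2)
        · rw [hfpos i hi, hfneg j hj] at hij
          exact absurd hij (σ' ⟨(i : ℕ), hi⟩).2
        · rw [hfneg i hi, hfpos j hj] at hij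
          exact absurd hij.symm (σ' ⟨(j : ℕ), hj⟩).2
        · refine Fin.ext ?_
          have := i.isLt; have := j.isLt
          omega
      have hbij : Function.Bijective f := by
        rw [Fintype.bijective_iff_injective_and_card]
        exact ⟨hinj, by rw [Fintype.card_fin, hcard]⟩
      refine ⟨Equiv.ofBijective f hbij, ?_, ?_⟩
      · intro i h
        have hσapp : ∀ j : Fin n, Equiv.ofBijective f hbij j = f j := fun j => rfl
        rw [hσapp, hσapp]
        have hile : i < n - 1 := by omega
        rw [hfpos ⟨i, by omega⟩ hile]
        by_cases h2 : i + 1 < n - 1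
        · rw [hfpos ⟨i + 1, h⟩ h2]
          exact hσ'e i h2
        · rw [hfneg ⟨i + 1, h⟩ (by simpa using h2)]
          have h4 : (⟨i, hile⟩ : Fin (n - 1)) = ⟨n - 1 - 1, by omega⟩ :=
            Fin.ext (show i = n - 1 - 1 by omega)
          have h5 : (σ' ⟨i, hile⟩ : T) = x' := by
            rw [h4]
            exact hσ'end (by omega)
          show E (σ' ⟨i, hile⟩).1 y
          rw [h5]
          exact hx2
      · intro hn
        have hσapp : Equiv.ofBijective f hbij ⟨n - 1, hn⟩ = f ⟨n - 1, hn⟩ := rfl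
        rw [hσapp, hfneg ⟨n - 1, hn⟩ (by show ¬ (n - 1 < n - 1); omega)]

end HamAux

/-- every unilaterally connected oriented circular-arc catch
digraph has a directed Hamiltonian path. -/
theorem stmt_3 {V : Type*} [Fintype V] (E : V → V → Prop)
    (hirr : ∀ v, ¬ E v v) (horient : Oriented E)
    (hcatch : IsCACatchDigraph E)
    (hunilateral : ∀ u v : V,
        Relation.ReflTransGen E u v ∨ Relation.ReflTransGen E v u) :
    ∃ σ : Fin (Fintype.card V) ≃ V,
      ∀ (i : ℕ) (h : i + 1 < Fintype.card V),
        E (σ ⟨i, by omega⟩) (σ ⟨i + 1, h⟩) := by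
  classical
  obtain ⟨a, ℓ, p, hown, hEdef⟩ := hcatch
  by_cases hV : IsEmpty V
  · refine ⟨(Fintype.equivFin V).symm, fun i h => ?_⟩
    rw [Fintype.card_eq_zero] at h
    omega
  · have : Nonempty V := not_isEmpty_iff.mp hV
    obtain ⟨y, hy⟩ := HamAux.exists_max E hunilateral
    obtain ⟨σ, hσe, -⟩ := HamAux.aux (Fintype.card V) V E a ℓ p hown hEdef horient
      hunilateral rfl y hy
    exact ⟨σ, hσe⟩
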